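/- Let ν > 1/2 and let λ* > 0 satisfy J_ν(√λ*) = 0 with Y_ν(√λ*) ≠ 0. Then there exist ε₀ > 0 and a C¹ function λ : [0, ε₀) → ℝ with λ(0) = λ*, such that for each ε ∈ (0, ε₀), λ(ε) solves the cross-product equation J_ν(√λ) Y_ν(ε√λ) − Y_ν(√λ) J_ν(ε√λ) = 0, and λ(ε) = λ* + (π² λ*^{ν+1} Y_ν(√λ*)² / (ν 4^ν Γ(ν)²)) ε^{2ν} + o(ε^{2ν}) as ε → 0⁺. -/

import Mathlib

open Real Filter Topology
open Set

/-- If `f` has derivative `g s` at every `s ≠ 0` of an open set `U ∋ 0`, is continuous at `0`,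
and `g` is continuous on `U`, then `f` is `C¹` on `U` and `HasDerivAt f (g 0) 0`. -/
lemma aux_c1 {f g : ℝ → ℝ} {U : Set ℝ} (hU : IsOpen U) (h0 : (0:ℝ) ∈ U)
    (hd : ∀ s ∈ U, s ≠ 0 → HasDerivAt f (g s) s)
    (hc : ContinuousAt f 0) (hg : ContinuousOn g U) :
    ContDiffOn ℝ 1 f U ∧ HasDerivAt f (g 0) 0 := by
  have hg0 : ContinuousAt g 0 := hg.continuousAt (hU.mem_nhds h0)
  have hUr : U ∩ Ioi 0 ∈ 𝓝[>] (0:ℝ) :=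
    inter_mem (mem_nhdsWithin_of_mem_nhds (hU.mem_nhds h0)) self_mem_nhdsWithin
  have hUl : U ∩ Iio 0 ∈ 𝓝[<] (0:ℝ) :=
    inter_mem (mem_nhdsWithin_of_mem_nhds (hU.mem_nhds h0)) self_mem_nhdsWithin
  have hdiff_r : DifferentiableOn ℝ f (U ∩ Ioi 0) := fun y hy =>
    ((hd y hy.1 (ne_of_gt hy.2)).differentiableAt).differentiableWithinAt
  have hdiff_l : DifferentiableOn ℝ f (U ∩ Iio 0) := fun y hy =>
    ((hd y hy.1 (ne_of_lt hy.2)).differentiableAt).differentiableWithinAt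
  have hderiv_r : Tendsto (deriv f) (𝓝[>] (0:ℝ)) (𝓝 (g 0)) := by
    apply ((hg0.tendsto).mono_left nhdsWithin_le_nhds).congr'
    filter_upwards [hUr] with y hy
    exact ((hd y hy.1 (ne_of_gt hy.2)).deriv).symm
  have hderiv_l : Tendsto (deriv f) (𝓝[<] (0:ℝ)) (𝓝 (g 0)) := by
    apply ((hg0.tendsto).mono_left nhdsWithin_le_nhds).congr'
    filter_upwards [hUl] with y hy
    exact ((hd y hy.1 (ne_of_lt hy.2)).deriv).symm
  have A : HasDerivWithinAt f (g 0) (Ici 0) 0 :=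
    hasDerivWithinAt_Ici_of_tendsto_deriv hdiff_r hc.continuousWithinAt hUr hderiv_r
  have B : HasDerivWithinAt f (g 0) (Iic 0) 0 :=
    hasDerivWithinAt_Iic_of_tendsto_deriv hdiff_l hc.continuousWithinAt hUl hderiv_l
  have hAt : HasDerivAt f (g 0) 0 := by simpa using B.union A
  refine ⟨?_, hAt⟩
  have hiff := contDiffOn_succ_iff_deriv_of_isOpen (n := 0) (f := f) (𝕜 := ℝ) hU
  rw [zero_add] at hiff
  rw [hiff]
  refine ⟨?_, by simp, ?_⟩
  · intro y hy
    by_cases hy0 : y = 0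
    · subst hy0; exact hAt.differentiableAt.differentiableWithinAt
    · exact (hd y hy hy0).differentiableAt.differentiableWithinAt
  · rw [contDiffOn_zero]
    apply hg.congr
    intro y hy
    by_cases hy0 : y = 0
    · subst hy0; exact hAt.deriv
    · exact (hd y hy hy0).deriv

/-- perturbation of a zero of `J_ν` into a branch of solutions of the
cross-product equation. If `J_ν(√λ*) = 0` and `Y_ν(√λ*) ≠ 0`, there is a `C¹`
branch `λ(ε)` with `λ(0) = λ*`, solving
`J_ν(√λ) Y_ν(ε√λ) - Y_ν(√λ) J_ν(ε√λ) = 0` for `ε ∈ (0, ε₀)`, and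
`λ(ε) = λ* + a ε^{2ν} + o(ε^{2ν})` with
`a = π² λ*^{ν+1} Y_ν(√λ*)² / (ν 4^ν Γ(ν)²)`. Here `J` and `Y` are the Bessel
functions of order `ν`, characterized by the Bessel ODE, the small-argument
asymptotics and the Wronskian identity. -/
theorem cross_product_branch (ν : ℝ) (hν : 1 / 2 < ν) (J Y : ℝ → ℝ)
    (hJsmooth : ContDiffOn ℝ 2 J (Set.Ioi 0)) (hYsmooth : ContDiffOn ℝ 2 Y (Set.Ioi 0))
    (hJode : ∀ t > (0 : ℝ),
      t ^ 2 * deriv (deriv J) t + t * deriv J t + (t ^ 2 - ν ^ 2) * J t = 0)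
    (hYode : ∀ t > (0 : ℝ),
      t ^ 2 * deriv (deriv Y) t + t * deriv Y t + (t ^ 2 - ν ^ 2) * Y t = 0)
    (hJasymp : Tendsto (fun t => J t / ((t / 2) ^ ν / Real.Gamma (ν + 1)))
      (nhdsWithin 0 (Set.Ioi 0)) (nhds 1))
    (hYasymp : Tendsto (fun t => Y t / (-(Real.Gamma ν / π) * (2 / t) ^ ν))
      (nhdsWithin 0 (Set.Ioi 0)) (nhds 1))
    (hW : ∀ t > (0 : ℝ), J t * deriv Y t - deriv J t * Y t = 2 / (π * t))
    (lamStar : ℝ) (hlam : 0 < lamStar)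
    (hJz : J (Real.sqrt lamStar) = 0) (hYz : Y (Real.sqrt lamStar) ≠ 0) :
    ∃ ε₀ > (0 : ℝ), ∃ lam : ℝ → ℝ,
      ContDiffOn ℝ 1 lam (Set.Ico 0 ε₀) ∧ lam 0 = lamStar ∧
      (∀ ε ∈ Set.Ioo (0 : ℝ) ε₀,
        J (Real.sqrt (lam ε)) * Y (ε * Real.sqrt (lam ε)) -
          Y (Real.sqrt (lam ε)) * J (ε * Real.sqrt (lam ε)) = 0) ∧
      Tendsto (fun ε =>
          (lam ε - lamStar -
            (π ^ 2 * lamStar ^ (ν + 1) * (Y (Real.sqrt lamStar)) ^ 2 /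
              (ν * 4 ^ ν * (Real.Gamma ν) ^ 2)) * ε ^ (2 * ν)) / ε ^ (2 * ν))
        (nhdsWithin 0 (Set.Ioi 0)) (nhds 0) := by
  -- ## Basic positivity facts
  have hπ : (0:ℝ) < π := Real.pi_pos
  have hν0 : (0:ℝ) < ν := lt_trans (by norm_num) hν
  have hc0 : (0:ℝ) < Real.Gamma ν := Real.Gamma_pos_of_pos hν0
  set c : ℝ := Real.Gamma ν with hc_def
  have h4 : (0:ℝ) < 4 ^ ν := Real.rpow_pos_of_pos (by norm_num) ν
  have hts : (0:ℝ) < Real.sqrt lamStar := Real.sqrt_pos.2 hlam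
  have htsq : Real.sqrt lamStar ^ 2 = lamStar := Real.sq_sqrt hlam.le
  have h2ν : (1:ℝ) < 2 * ν := by linarith
  have h2ν0 : (2 * ν) ≠ 0 := by positivity
  set e : ℝ := 1 / (2 * ν) with he_def
  have he0 : 0 < e := by positivity
  -- ## differentiability of J, Y and the quotient h = J/Y
  have hJdiff : ∀ t : ℝ, 0 < t → HasDerivAt J (deriv J t) t := fun t ht =>
    (((hJsmooth.contDiffAt (isOpen_Ioi.mem_nhds ht)).differentiableAt
      (by norm_num)).hasDerivAt)
  have hYdiff : ∀ t : ℝ, 0 < t → HasDerivAt Y (deriv Y t) t := fun t ht =>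
    (((hYsmooth.contDiffAt (isOpen_Ioi.mem_nhds ht)).differentiableAt
      (by norm_num)).hasDerivAt)
  have hYcont : ∀ t : ℝ, 0 < t → ContinuousAt Y t := fun t ht =>
    (hYsmooth.contDiffAt (isOpen_Ioi.mem_nhds ht)).continuousAt
  set h : ℝ → ℝ := fun t => J t / Y t with hh_def
  have hdivJY : ∀ t : ℝ, 0 < t → Y t ≠ 0 →
      HasDerivAt h (-2 / (π * t * (Y t) ^ 2)) t := by
    intro t ht hY
    have := (hJdiff t ht).div (hYdiff t ht) hY
    refine this.congr_deriv (Eq.symm ?_)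
    have hw := hW t ht
    have h1 : deriv J t * Y t - J t * deriv Y t = -(2 / (π * t)) := by linarith
    rw [h1, neg_div, neg_div, div_div]
  -- ## small-t region where Y ≠ 0
  set rY : ℝ → ℝ := fun t => Y t / (-(c / π) * (2 / t) ^ ν) with hrY_def
  obtain ⟨t₁, ht₁, hrY_big⟩ : ∃ t₁ > (0:ℝ), ∀ t ∈ Ioo (0:ℝ) t₁, 1/2 < rY t := by
    have hev : ∀ᶠ t in 𝓝[>] (0:ℝ), 1/2 < rY t :=
      hYasymp.eventually (eventually_gt_nhds (by norm_num))
    obtain ⟨t₁, ht₁, hsub⟩ := mem_nhdsGT_iff_exists_Ioo_subset.1 hev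
    exact ⟨t₁, ht₁, fun t ht => hsub ht⟩
  have hYne : ∀ t ∈ Ioo (0:ℝ) t₁, Y t ≠ 0 := by
    intro t ht hY0
    have := hrY_big t ht
    rw [hrY_def] at this
    simp only [hY0, zero_div] at this
    norm_num at this
  have hrY_lim : Tendsto rY (𝓝[>] (0:ℝ)) (𝓝 1) := hYasymp
  -- ## limit of h at 0+
  have hΓ1 : (0:ℝ) < Real.Gamma (ν+1) := Real.Gamma_pos_of_pos (by linarith)
  have hIoo_mem : Ioo (0:ℝ) t₁ ∈ 𝓝[>] (0:ℝ) := Ioo_mem_nhdsGT_of_mem ⟨le_refl 0, ht₁⟩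
  have hh0 : Tendsto h (𝓝[>] (0:ℝ)) (𝓝 0) := by
    have key : ∀ t ∈ Ioo (0:ℝ) t₁, h t =
        (J t / ((t/2)^ν / Real.Gamma (ν+1))) * (rY t)⁻¹ *
          (-π / (Real.Gamma (ν+1) * c) * ((t/2)^ν * (t/2)^ν)) := by
      intro t ht
      have ht0 : (0:ℝ) < t := ht.1
      have hYt := hYne t ht
      have hA : (0:ℝ) < (t/2)^ν := Real.rpow_pos_of_pos (by positivity) ν
      have hB : (0:ℝ) < (2/t)^ν := Real.rpow_pos_of_pos (by positivity) ν
      have hmY : (-(c/π) * (2/t)^ν) < 0 :=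
        mul_neg_of_neg_of_pos (neg_lt_zero.2 (by positivity)) hB
      have e1 : (2/t:ℝ)^ν * (t/2)^ν = 1 := by
        rw [← Real.mul_rpow (by positivity) (by positivity),
          show (2/t) * (t/2) = 1 by field_simp, Real.one_rpow]
      have hrYinv : (rY t)⁻¹ = (-(c/π) * (2/t)^ν) / Y t := by
        rw [hrY_def, inv_div]
      rw [hh_def, hrYinv]
      field_simp
      linear_combination (-(J t)) * e1
    have h1 : Tendsto (fun t:ℝ => (t/2)^ν * (t/2)^ν) (𝓝[>] (0:ℝ)) (𝓝 0) := by
      have hcont : ContinuousAt (fun x:ℝ => x ^ ν) 0 :=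
        Real.continuousAt_rpow_const 0 _ (Or.inr hν0.le)
      have h2 : Tendsto (fun t:ℝ => t/2) (𝓝[>] (0:ℝ)) (𝓝 0) := by
        have : Tendsto (fun t:ℝ => t/2) (𝓝 (0:ℝ)) (𝓝 (0/2)) :=
          tendsto_id.div_const 2
        simpa using this.mono_left nhdsWithin_le_nhds
      have h3 : Tendsto (fun t:ℝ => (t/2)^ν) (𝓝[>] (0:ℝ)) (𝓝 0) := by
        have := hcont.tendsto.comp h2
        simpa [Function.comp_def, Real.zero_rpow hν0.ne'] using this
      simpa using h3.mul h3
    have hM : Tendsto (fun t => -π / (Real.Gamma (ν+1) * c) * ((t/2)^ν * (t/2)^ν))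
        (𝓝[>] (0:ℝ)) (𝓝 0) := by
      simpa using h1.const_mul (-π / (Real.Gamma (ν+1) * c))
    have hrinv : Tendsto (fun t => (rY t)⁻¹) (𝓝[>] (0:ℝ)) (𝓝 1) := by
      simpa using hrY_lim.inv₀ one_ne_zero
    have hmul := (hJasymp.mul hrinv).mul hM
    rw [show (1:ℝ) * 1 * 0 = 0 by ring] at hmul
    apply hmul.congr'
    filter_upwards [hIoo_mem] with t ht
    exact (key t ht).symm
  -- ## the substitution p s = s^(1/(2ν)) and the extended function H
  set p : ℝ → ℝ := fun s => s ^ e with hp_def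
  set s₁ : ℝ := t₁ ^ (2 * ν) with hs₁_def
  have hs₁0 : 0 < s₁ := Real.rpow_pos_of_pos ht₁ _
  have h2νe : (2 * ν) * e = 1 := by
    rw [he_def]; field_simp
  have hps : ∀ s ∈ Ioo (0:ℝ) s₁, p s ∈ Ioo (0:ℝ) t₁ := by
    intro s hs
    refine ⟨Real.rpow_pos_of_pos hs.1 e, ?_⟩
    have := Real.rpow_lt_rpow hs.1.le hs.2 he0
    rwa [hs₁_def, ← Real.rpow_mul ht₁.le, h2νe, Real.rpow_one] at this
  have hp0 : Tendsto p (𝓝[>] (0:ℝ)) (𝓝 0) := by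
    have hcont : ContinuousAt (fun x:ℝ => x ^ e) 0 :=
      Real.continuousAt_rpow_const 0 _ (Or.inr he0.le)
    have := hcont.tendsto.mono_left (nhdsWithin_le_nhds (s := Ioi (0:ℝ)))
    simpa [Real.zero_rpow he0.ne'] using this
  have hpt : Tendsto p (𝓝[>] (0:ℝ)) (𝓝[>] (0:ℝ)) := by
    rw [tendsto_nhdsWithin_iff]
    exact ⟨hp0, by filter_upwards [self_mem_nhdsWithin] with s hs using
      Real.rpow_pos_of_pos hs e⟩
  set L : ℝ := -(π / (ν * c ^ 2 * 4 ^ ν)) with hL_def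
  have hL : L ≠ 0 := by
    simp only [hL_def, ne_eq, neg_eq_zero, div_eq_zero_iff]
    push_neg
    constructor
    · exact hπ.ne'
    · positivity
  set G : ℝ → ℝ := fun s => if 0 < s then -1 / (π * ν * s * (Y (p s)) ^ 2) else L with hG_def
  set H : ℝ → ℝ := fun s => if 0 < s then h (p s) else L * s with hH_def
  set U : Set ℝ := Ioo (-s₁) s₁ with hU_def
  have hUopen : IsOpen U := isOpen_Ioo
  have hG0 : G 0 = L := by simp [hG_def]
  have hU0 : (0:ℝ) ∈ U := by constructor <;> simp [hs₁0] <;> linarith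
  -- derivative of H away from 0
  have hHd : ∀ s ∈ U, s ≠ 0 → HasDerivAt H (G s) s := by
    intro s hsU hs0
    rcases lt_or_gt_of_ne hs0 with hneg | hpos
    · have hev : H =ᶠ[𝓝 s] fun x => L * x := by
        filter_upwards [Iio_mem_nhds hneg] with x hx
        simp only [hH_def]
        rw [if_neg (not_lt.2 (le_of_lt hx))]
      have hd : HasDerivAt (fun x : ℝ => L * x) L s := by
        simpa using (hasDerivAt_id s).const_mul L
      have hres := hd.congr_of_eventuallyEq hev
      have : G s = L := by rw [hG_def]; simp [not_lt.2 hneg.le]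
      rwa [this]
    · have hsIoo : s ∈ Ioo (0:ℝ) s₁ := ⟨hpos, hsU.2⟩
      have ht := hps s hsIoo
      have hYt := hYne _ ht
      have inner : HasDerivAt (fun x:ℝ => x ^ e) (e * s ^ (e - 1)) s :=
        Real.hasDerivAt_rpow_const (Or.inl hs0)
      have outer := hdivJY (p s) ht.1 hYt
      have comp := outer.comp s inner
      have hev : H =ᶠ[𝓝 s] (h ∘ fun x:ℝ => x ^ e) := by
        filter_upwards [Ioi_mem_nhds hpos] with x hx
        simp only [hH_def, Function.comp_apply]
        rw [if_pos (show (0:ℝ) < x from hx)]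
      have hd := comp.congr_of_eventuallyEq hev
      refine hd.congr_deriv (Eq.symm ?_)
      rw [hG_def]
      simp only [if_pos hpos]
      have hpe : p s = s ^ e := rfl
      have hse : s ^ (e - 1) = s ^ e / s := by
        rw [Real.rpow_sub hpos, Real.rpow_one]
      have hps0 : (0:ℝ) < s ^ e := Real.rpow_pos_of_pos hpos e
      rw [hse, hpe, he_def]
      field_simp
  -- continuity of H at 0
  have hH00 : H 0 = 0 := by simp [hH_def]
  have hHcont : ContinuousAt H 0 := by
    rw [ContinuousAt, hH00]
    have goal2 : Tendsto H (𝓝[≤] (0:ℝ) ⊔ 𝓝[>] (0:ℝ)) (𝓝 0) := by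
      rw [tendsto_sup]
      constructor
      · have hlin : Tendsto (fun x:ℝ => L * x) (𝓝[≤] (0:ℝ)) (𝓝 0) := by
          have h2 : Tendsto (fun x:ℝ => L * x) (𝓝 (0:ℝ)) (𝓝 (L * 0)) :=
            tendsto_id.const_mul L
          rw [mul_zero] at h2
          exact h2.mono_left nhdsWithin_le_nhds
        apply hlin.congr'
        filter_upwards [self_mem_nhdsWithin] with x hx
        simp only [hH_def]
        rw [if_neg (not_lt.2 hx)]
      · have := hh0.comp hpt
        apply this.congr'
        filter_upwards [self_mem_nhdsWithin] with x hx
        simp only [hH_def, Function.comp_apply]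
        rw [if_pos (show (0:ℝ) < x from hx)]
    rwa [nhdsLE_sup_nhdsGT] at goal2
  -- continuity of G on U
  have hrne : ∀ s ∈ Ioo (0:ℝ) s₁, rY (p s) ≠ 0 := by
    intro s hs
    have := hrY_big _ (hps s hs)
    intro h0; rw [h0] at this; norm_num at this
  have keyG : ∀ s ∈ Ioo (0:ℝ) s₁, G s = -π / (ν * c^2 * 4^ν * (rY (p s))^2) := by
    intro s hs
    have ht := hps s hs
    have hYt := hYne _ ht
    have ht0 := ht.1
    have hB : (0:ℝ) < (2 / p s)^ν := Real.rpow_pos_of_pos (by positivity) ν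
    have hmY : (-(c/π) * (2 / p s)^ν) ≠ 0 :=
      (mul_neg_of_neg_of_pos (neg_lt_zero.2 (by positivity)) hB).ne
    have hYeq : Y (p s) = rY (p s) * (-(c/π) * (2 / p s)^ν) := by
      rw [hrY_def]
      field_simp
    have e2 : (p s)^(ν+ν) = s := by
      have hee : e * (ν+ν) = 1 := by rw [he_def]; field_simp; ring
      rw [hp_def, ← Real.rpow_mul hs.1.le, hee, Real.rpow_one]
    have e3 : (2:ℝ)^(ν+ν) = 4^ν := by
      have h4eq : (4:ℝ) = (2:ℝ)^(2:ℝ) := by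
        have := Real.rpow_natCast (2:ℝ) 2
        norm_num at this
        linarith
      rw [h4eq, ← Real.rpow_mul (by norm_num)]
      ring_nf
    have hBB : ((2 / p s)^ν * (2 / p s)^ν) * s = 4^ν := by
      rw [← Real.rpow_add (by positivity)]
      rw [Real.div_rpow (by norm_num) ht0.le, e2, e3]
      rw [div_mul_eq_mul_div, mul_div_assoc, div_self hs.1.ne', mul_one]
    have hX : π * ν * s * (Y (p s))^2 = ν * c^2 * 4^ν * (rY (p s))^2 / π := by
      simp only [hrY_def]
      have hm : ((-(c/π) * (2 / p s)^ν)) ≠ 0 := by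
        apply mul_ne_zero _ hB.ne'
        simp [div_eq_zero_iff, hc0.ne', hπ.ne']
      field_simp
      linear_combination hBB
    rw [hG_def]
    simp only [if_pos hs.1]
    rw [hX, div_div_eq_mul_div]
    ring
  have hGlim : Tendsto G (𝓝[>] (0:ℝ)) (𝓝 L) := by
    have h1 : Tendsto (fun s => rY (p s)) (𝓝[>] (0:ℝ)) (𝓝 1) := hrY_lim.comp hpt
    have h2 : Tendsto (fun s => ν * c^2 * 4^ν * (rY (p s))^2)
        (𝓝[>] (0:ℝ)) (𝓝 (ν * c^2 * 4^ν * 1)) := by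
      have := (h1.pow 2).const_mul (ν * c^2 * 4^ν)
      simpa using this
    have h3 := (tendsto_const_nhds (x := -π) (f := 𝓝[>] (0:ℝ))).div h2 (by positivity)
    have h4 : -π / (ν * c^2 * 4^ν * 1) = L := by rw [hL_def]; field_simp
    rw [h4] at h3
    apply h3.congr'
    filter_upwards [Ioo_mem_nhdsGT_of_mem ⟨le_refl (0:ℝ), hs₁0⟩] with s hs
    exact (keyG s hs).symm
  have hGcont : ContinuousOn G U := by
    intro s hsU
    apply ContinuousAt.continuousWithinAt
    rcases lt_trichotomy s 0 with hneg | rfl | hpos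
    · have hev : G =ᶠ[𝓝 s] fun _ => L := by
        filter_upwards [Iio_mem_nhds hneg] with x hx
        simp only [hG_def]
        rw [if_neg (not_lt.2 hx.le)]
      exact (continuousAt_congr hev).2 continuousAt_const
    · rw [ContinuousAt, hG0]
      have goal2 : Tendsto G (𝓝[≤] (0:ℝ) ⊔ 𝓝[>] (0:ℝ)) (𝓝 L) := by
        rw [tendsto_sup]
        refine ⟨?_, hGlim⟩
        apply (tendsto_const_nhds (x := L)).congr'
        filter_upwards [self_mem_nhdsWithin] with x hx
        simp only [hG_def]
        rw [if_neg (not_lt.2 hx)]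
      rwa [nhdsLE_sup_nhdsGT] at goal2
    · have ht := hps s ⟨hpos, hsU.2⟩
      have hYt := hYne _ ht
      have hp_cont : ContinuousAt p s :=
        Real.continuousAt_rpow_const s e (Or.inl hpos.ne')
      have hYp : ContinuousAt (fun x => Y (p x)) s := (hYcont _ ht.1).comp hp_cont
      have hform : ContinuousAt (fun x => -1 / (π * ν * x * (Y (p x))^2)) s := by
        apply ContinuousAt.div continuousAt_const
        · exact (continuousAt_const.mul continuousAt_id).mul (hYp.pow 2)
        · have hY2 : (0:ℝ) < (Y (p s))^2 := by positivity
          have : (0:ℝ) < π * ν * s := by positivity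
          positivity
      have hev : G =ᶠ[𝓝 s] fun x => -1 / (π * ν * x * (Y (p x))^2) := by
        filter_upwards [Ioi_mem_nhds hpos] with x hx
        simp only [hG_def]
        rw [if_pos (show (0:ℝ) < x from hx)]
      exact (continuousAt_congr hev).2 hform
  obtain ⟨hHC1, hH0d⟩ := aux_c1 hUopen hU0 hHd hHcont hGcont
  rw [hG0] at hH0d
  -- ## first inverse: Hinv
  have hHC1at : ContDiffAt ℝ 1 H 0 := hHC1.contDiffAt (hUopen.mem_nhds hU0)
  have hHf' := hH0d.hasFDerivAt_equiv hL
  set Hinv : ℝ → ℝ := hHC1at.localInverse hHf' one_ne_zero with hHinv_def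
  have hHinvC1 : ContDiffAt ℝ 1 Hinv 0 := by
    have := hHC1at.to_localInverse (hf' := hHf') (hn := one_ne_zero)
    rwa [hH00] at this
  have hHinv0 : Hinv 0 = 0 := by
    have := hHC1at.localInverse_apply_image (hf' := hHf') (hn := one_ne_zero)
    rwa [hH00] at this
  have hHinv_right : ∀ᶠ y in 𝓝 (0:ℝ), H (Hinv y) = y := by
    have := (hHC1at.hasStrictFDerivAt' hHf' one_ne_zero).eventually_right_inverse
    rwa [hH00] at this
  have hHinv_cont : ContinuousAt Hinv 0 := by
    have := (hHC1at.hasStrictFDerivAt' hHf' one_ne_zero).localInverse_continuousAt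
    rwa [hH00] at this
  have hHinv_deriv : HasDerivAt Hinv L⁻¹ 0 := by
    refine HasDerivAt.of_local_left_inverse hHinv_cont ?_ hL hHinv_right
    rwa [hHinv0]
  -- ## the function g and Φ
  set g : ℝ → ℝ := fun x => J (Real.sqrt x) / Y (Real.sqrt x) with hg_def
  have hgz : g lamStar = 0 := by simp [hg_def, hJz]
  have hgC1 : ContDiffAt ℝ 1 g lamStar := by
    have hsqrtC : ContDiffAt ℝ 1 Real.sqrt lamStar := Real.contDiffAt_sqrt hlam.ne'
    have hJat : ContDiffAt ℝ 1 J (Real.sqrt lamStar) :=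
      (hJsmooth.contDiffAt (isOpen_Ioi.mem_nhds hts)).of_le (by norm_num)
    have hYat : ContDiffAt ℝ 1 Y (Real.sqrt lamStar) :=
      (hYsmooth.contDiffAt (isOpen_Ioi.mem_nhds hts)).of_le (by norm_num)
    have h1 : ContDiffAt ℝ 1 (J ∘ Real.sqrt) lamStar := ContDiffAt.comp lamStar hJat hsqrtC
    have h2 : ContDiffAt ℝ 1 (Y ∘ Real.sqrt) lamStar := ContDiffAt.comp lamStar hYat hsqrtC
    exact h1.div h2 hYz
  have hg_cont : ContinuousAt g lamStar := hgC1.continuousAt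
  have hg_deriv : HasDerivAt g (-1 / (π * lamStar * (Y (Real.sqrt lamStar)) ^ 2)) lamStar := by
    have houter := hdivJY (Real.sqrt lamStar) hts hYz
    have hinner : HasDerivAt Real.sqrt (1 / (2 * Real.sqrt lamStar)) lamStar :=
      Real.hasDerivAt_sqrt hlam.ne'
    have hcomp := houter.comp lamStar hinner
    refine hcomp.congr_deriv (Eq.symm ?_)
    have hss : Real.sqrt lamStar * Real.sqrt lamStar = lamStar := Real.mul_self_sqrt hlam.le
    field_simp
    linear_combination (-1:ℝ) * hss
  set a : ℝ := π ^ 2 * lamStar ^ (ν + 1) * (Y (Real.sqrt lamStar)) ^ 2 /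
      (ν * 4 ^ ν * c ^ 2) with ha_def
  have ha0 : 0 < a := by
    have : (0:ℝ) < (Y (Real.sqrt lamStar))^2 := by positivity
    have : (0:ℝ) < lamStar ^ (ν+1) := Real.rpow_pos_of_pos hlam _
    positivity
  set Φ : ℝ → ℝ := fun x => Hinv (g x) / x ^ ν with hΦ_def
  have hΦz : Φ lamStar = 0 := by
    simp [hΦ_def, hgz, hHinv0]
  have hΦC1 : ContDiffAt ℝ 1 Φ lamStar := by
    have hHinvAt : ContDiffAt ℝ 1 Hinv (g lamStar) := by rwa [hgz]
    have hcomp : ContDiffAt ℝ 1 (Hinv ∘ g) lamStar := ContDiffAt.comp lamStar hHinvAt hgC1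
    have hpowC : ContDiffAt ℝ 1 (fun x:ℝ => x ^ ν) lamStar :=
      Real.contDiffAt_rpow_const_of_ne hlam.ne'
    exact hcomp.div hpowC (Real.rpow_pos_of_pos hlam ν).ne' 
  have hΦ_deriv : HasDerivAt Φ a⁻¹ lamStar := by
    have hinvd : HasDerivAt Hinv L⁻¹ (g lamStar) := by rwa [hgz]
    have hcompd := hinvd.comp lamStar hg_deriv
    have hpowd : HasDerivAt (fun x:ℝ => x ^ ν) (ν * lamStar ^ (ν - 1)) lamStar :=
      Real.hasDerivAt_rpow_const (Or.inl hlam.ne')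
    have hpow_pos : (0:ℝ) < lamStar ^ ν := Real.rpow_pos_of_pos hlam ν
    have hdiv := hcompd.div hpowd hpow_pos.ne'
    refine hdiv.congr_deriv (Eq.symm ?_)
    have hHg0 : (Hinv ∘ g) lamStar = 0 := by
      simp only [Function.comp_apply, hgz, hHinv0]
    rw [hHg0]
    have hν1 : lamStar ^ (ν + 1) = lamStar ^ ν * lamStar := by
      rw [Real.rpow_add hlam, Real.rpow_one]
    have hY2 : (Y (Real.sqrt lamStar))^2 ≠ 0 := pow_ne_zero 2 hYz
    rw [ha_def, hL_def, hν1]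
    field_simp
    ring
  -- ## second inverse: lamδ
  have hΦf' := hΦ_deriv.hasFDerivAt_equiv (inv_ne_zero ha0.ne')
  set lamδ : ℝ → ℝ := hΦC1.localInverse hΦf' one_ne_zero with hlamδ_def
  have hlamδC1 : ContDiffAt ℝ 1 lamδ 0 := by
    have := hΦC1.to_localInverse (hf' := hΦf') (hn := one_ne_zero)
    rwa [hΦz] at this
  have hlamδ0 : lamδ 0 = lamStar := by
    have := hΦC1.localInverse_apply_image (hf' := hΦf') (hn := one_ne_zero)
    rwa [hΦz] at this
  have hlamδ_right : ∀ᶠ δ in 𝓝 (0:ℝ), Φ (lamδ δ) = δ := by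
    have := (hΦC1.hasStrictFDerivAt' hΦf' one_ne_zero).eventually_right_inverse
    rwa [hΦz] at this
  have hlamδ_cont : ContinuousAt lamδ 0 := hlamδC1.continuousAt
  have hlamδ_deriv : HasDerivAt lamδ a 0 := by
    have := HasDerivAt.of_local_left_inverse hlamδ_cont
      (by rwa [hlamδ0] : HasDerivAt Φ a⁻¹ (lamδ 0)) (inv_ne_zero ha0.ne') hlamδ_right
    rwa [inv_inv] at this
  -- ## choose ε₀
  set q : ℝ → ℝ := fun ε => ε ^ (2 * ν) with hq_def
  have hq0 : q 0 = 0 := by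
    simp only [hq_def]
    exact Real.zero_rpow h2ν0
  have hqd : ∀ ε : ℝ, HasDerivAt q ((2*ν) * ε ^ (2*ν - 1)) ε := fun ε =>
    Real.hasDerivAt_rpow_const (Or.inr h2ν.le)
  have hqC1 : ContDiff ℝ 1 q := by
    rw [contDiff_one_iff_deriv]
    refine ⟨fun ε => (hqd ε).differentiableAt, ?_⟩
    have hdq : deriv q = fun ε => (2*ν) * ε ^ (2*ν-1) := funext fun ε => (hqd ε).deriv
    rw [hdq]
    apply continuous_const.mul
    rw [continuous_iff_continuousAt]
    intro x
    exact Real.continuousAt_rpow_const x _ (Or.inr (by linarith))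
  have hqcont0 : ContinuousAt q 0 := hqC1.continuous.continuousAt
  -- neighborhood facts around lamStar
  have hYsqrt_cont : ContinuousAt (fun x => Y (Real.sqrt x)) lamStar :=
    (hYcont _ hts).comp (Real.continuous_sqrt.continuousAt)
  have hWev : ∀ᶠ x in 𝓝 lamStar,
      0 < x ∧ Y (Real.sqrt x) ≠ 0 ∧ H (Hinv (g x)) = g x ∧ x < 2*lamStar := by
    have e1 : ∀ᶠ x in 𝓝 lamStar, 0 < x := eventually_gt_nhds hlam
    have e2 : ∀ᶠ x in 𝓝 lamStar, Y (Real.sqrt x) ≠ 0 := hYsqrt_cont.eventually_ne hYz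
    have e3 : ∀ᶠ x in 𝓝 lamStar, H (Hinv (g x)) = g x := by
      have htd := hg_cont.tendsto
      rw [hgz] at htd
      exact htd.eventually hHinv_right
    have e4 : ∀ᶠ x in 𝓝 lamStar, x < 2*lamStar := eventually_lt_nhds (by linarith)
    exact e1.and (e2.and (e3.and e4))
  -- neighborhood facts around δ = 0
  obtain ⟨u, hu_mem, hu⟩ : ∃ u ∈ 𝓝 (0:ℝ), ContDiffOn ℝ 1 lamδ u :=
    hlamδC1.contDiffOn le_rfl (by simp)
  have hE : ∀ᶠ δ in 𝓝 (0:ℝ), δ ∈ u ∧ (0 < lamδ δ ∧ Y (Real.sqrt (lamδ δ)) ≠ 0 ∧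
      H (Hinv (g (lamδ δ))) = g (lamδ δ) ∧ lamδ δ < 2*lamStar) ∧ Φ (lamδ δ) = δ := by
    have h1 : ∀ᶠ δ in 𝓝 (0:ℝ), 0 < lamδ δ ∧ Y (Real.sqrt (lamδ δ)) ≠ 0 ∧
        H (Hinv (g (lamδ δ))) = g (lamδ δ) ∧ lamδ δ < 2*lamStar := by
      have htd := hlamδ_cont.tendsto
      rw [hlamδ0] at htd
      exact htd.eventually hWev
    have hu_ev : ∀ᶠ δ in 𝓝 (0:ℝ), δ ∈ u := hu_mem
    exact hu_ev.and (h1.and hlamδ_right)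
  have hEq : ∀ᶠ ε in 𝓝 (0:ℝ), q ε ∈ u ∧ (0 < lamδ (q ε) ∧
      Y (Real.sqrt (lamδ (q ε))) ≠ 0 ∧ H (Hinv (g (lamδ (q ε)))) = g (lamδ (q ε)) ∧
      lamδ (q ε) < 2*lamStar) ∧ Φ (lamδ (q ε)) = q ε := by
    have htd := hqcont0.tendsto
    rw [hq0] at htd
    exact htd.eventually hE
  obtain ⟨r₁, hr₁, hball⟩ := Metric.mem_nhds_iff.1 hEq
  set K : ℝ := Real.sqrt (2*lamStar) with hK_def
  have hK0 : 0 < K := Real.sqrt_pos.2 (by linarith)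
  refine ⟨min r₁ (t₁ / K), lt_min hr₁ (div_pos ht₁ hK0), fun ε => lamδ (q ε), ?_, ?_, ?_, ?_⟩
  · -- C¹ on Ico
    have hmaps : MapsTo q (Ico 0 (min r₁ (t₁ / K))) u := by
      intro ε hε
      have : ε ∈ Metric.ball (0:ℝ) r₁ := by
        rw [Metric.mem_ball, Real.dist_eq, sub_zero, abs_of_nonneg hε.1]
        exact lt_of_lt_of_le hε.2 (min_le_left _ _)
      exact (hball this).1
    have := ContDiffOn.comp hu (hqC1.contDiffOn) hmaps
    simpa [Function.comp_def] using this
  · -- value at 0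
    show lamδ (q 0) = lamStar
    rw [hq0, hlamδ0]
  · -- the cross-product equation
    intro ε hε
    have hε0 : 0 < ε := hε.1
    have hεball : ε ∈ Metric.ball (0:ℝ) r₁ := by
      rw [Metric.mem_ball, Real.dist_eq, sub_zero, abs_of_pos hε0]
      exact lt_of_lt_of_le hε.2 (min_le_left _ _)
    obtain ⟨-, ⟨hlmpos, hYsq, hright, hlmlt⟩, hΦeq⟩ := hball hεball
    set lm : ℝ := lamδ (q ε) with hlm_def
    have hq_pos : 0 < q ε := Real.rpow_pos_of_pos hε0 _
    have hpow_pos : 0 < lm ^ ν := Real.rpow_pos_of_pos hlmpos ν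
    have h1 : Hinv (g lm) = q ε * lm ^ ν := by
      have h2 := hΦeq
      rw [hΦ_def] at h2
      rw [div_eq_iff hpow_pos.ne'] at h2
      exact h2
    have h2 : g lm = H (q ε * lm ^ ν) := by
      rw [← h1]
      exact hright.symm
    have hs_pos : 0 < q ε * lm ^ ν := mul_pos hq_pos hpow_pos
    have hνe2 : ν * e = 1/2 := by
      rw [he_def]
      field_simp
    have hT : p (q ε * lm ^ ν) = ε * Real.sqrt lm := by
      simp only [hp_def, hq_def]
      rw [Real.mul_rpow (Real.rpow_pos_of_pos hε0 _).le hpow_pos.le,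
        ← Real.rpow_mul hε0.le, ← Real.rpow_mul hlmpos.le, h2νe, hνe2,
        Real.rpow_one, ← Real.sqrt_eq_rpow]
    have hTpos : 0 < ε * Real.sqrt lm := mul_pos hε0 (Real.sqrt_pos.2 hlmpos)
    have hTlt : ε * Real.sqrt lm < t₁ := by
      have hlt1 : Real.sqrt lm < K := by
        rw [hK_def]
        exact Real.sqrt_lt_sqrt hlmpos.le hlmlt
      have hlt2 : ε < t₁ / K := lt_of_lt_of_le hε.2 (min_le_right _ _)
      have := mul_lt_mul'' hlt2 hlt1 hε0.le (Real.sqrt_nonneg _)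
      rwa [div_mul_cancel₀ t₁ hK0.ne'] at this
    have hHs : H (q ε * lm ^ ν) = J (ε * Real.sqrt lm) / Y (ε * Real.sqrt lm) := by
      simp only [hH_def, if_pos hs_pos, hT, hh_def]
    have hfinal : J (Real.sqrt lm) / Y (Real.sqrt lm)
        = J (ε * Real.sqrt lm) / Y (ε * Real.sqrt lm) := by
      rw [← hHs, ← h2, hg_def]
    have hYT : Y (ε * Real.sqrt lm) ≠ 0 := hYne _ ⟨hTpos, hTlt⟩
    rw [div_eq_div_iff hYsq hYT] at hfinal
    linarith [hfinal]
  · -- the asymptotic expansion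
    have hslope := hasDerivAt_iff_tendsto_slope.1 hlamδ_deriv
    have h5 : Tendsto (fun δ => (lamδ δ - lamStar - a * δ) / δ) (𝓝[≠] (0:ℝ)) (𝓝 0) := by
      have h6 := hslope.sub_const a
      rw [sub_self] at h6
      apply h6.congr'
      filter_upwards [self_mem_nhdsWithin] with δ hδ
      have hδ0 : δ ≠ 0 := hδ
      rw [slope_def_field, hlamδ0]
      field_simp
      ring
    have hq_into : Tendsto q (𝓝[>] (0:ℝ)) (𝓝[≠] (0:ℝ)) := by
      rw [tendsto_nhdsWithin_iff]
      constructor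
      · have htd := hqcont0.tendsto
        rw [hq0] at htd
        exact htd.mono_left nhdsWithin_le_nhds
      · filter_upwards [self_mem_nhdsWithin] with ε hε
        exact (Real.rpow_pos_of_pos hε _).ne'
    have h7 := h5.comp hq_into
    simpa [Function.comp_def] using h7
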